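/- arXiv:2109.10935 — 4 statements merged into one kernel-verified Lean document; each statement's English description precedes it below -/
import Mathlib

section
/- Let x be a random vector in R^d whose components are i.i.d. Uniform([-1/2, 1/2]). Then for any symmetric matrix Δ ∈ R^{d×d}, E[(xᵀΔx)²] ≥ (1/180)·‖Δ‖_F², where ‖·‖_F denotes the Frobenius norm. -/
open MeasureTheory

/-- The uniform distribution on the cube `[-1/2, 1/2]^d`, with i.i.d. coordinates. -/
noncomputable def unifCube (d : ℕ) : Measure (Fin d → ℝ) :=
  Measure.pi fun _ => volume.restrict (Set.Icc (-(1/2) : ℝ) (1/2))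

namespace UnifCubeAux

open Finset

/-- The uniform measure on `[-1/2, 1/2]`. -/
noncomputable def mu0 : Measure ℝ := volume.restrict (Set.Icc (-(1/2) : ℝ) (1/2))

instance : IsProbabilityMeasure mu0 := by
  constructor
  rw [mu0, Measure.restrict_apply_univ, Real.volume_Icc]
  norm_num

/-- Moments of the uniform distribution on `[-1/2, 1/2]`. -/
noncomputable def mom (n : ℕ) : ℝ := ∫ t, t^n ∂mu0

lemma mom_eq (n : ℕ) : mom n = ((1/2:ℝ)^(n+1) - (-(1/2:ℝ))^(n+1))/(n+1) := by
  rw [mom, mu0, MeasureTheory.integral_Icc_eq_integral_Ioc,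
    ← intervalIntegral.integral_of_le (by norm_num : (-(1/2):ℝ) ≤ 1/2),
    integral_pow]

lemma mom_zero : mom 0 = 1 := by rw [mom_eq]; norm_num
lemma mom_one : mom 1 = 0 := by rw [mom_eq]; norm_num
lemma mom_two : mom 2 = 1/12 := by rw [mom_eq]; norm_num
lemma mom_four : mom 4 = 1/80 := by rw [mom_eq]; norm_num

lemma int_pow (n : ℕ) : Integrable (fun t : ℝ => t^n) mu0 := by
  rw [mu0]; exact (continuous_pow n).integrableOn_Icc

section PiIntegralSec

noncomputable local instance msR : MeasureSpace ℝ := ⟨mu0⟩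
local instance sfR : SigmaFinite (volume : Measure ℝ) := by
  show SigmaFinite mu0; infer_instance

lemma integral_monomial (d : ℕ) (e : Fin d → ℕ) :
    ∫ x, ∏ m, (x m)^(e m) ∂(unifCube d) = ∏ m, mom (e m) :=
  integral_fintype_prod_eq_prod (ι := Fin d) (fun m t => t ^ (e m))

lemma integrable_monomial (d : ℕ) (e : Fin d → ℕ) :
    Integrable (fun x => ∏ m, (x m)^(e m)) (unifCube d) :=
  Integrable.fintype_prod (fun m => int_pow (e m))

end PiIntegralSec

variable {d : ℕ}

/-- Multiplicity of index `m` in the quadruple `(i,j,k,l)`. -/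
def cnt (i j k l m : Fin d) : ℕ :=
  (if m = i then 1 else 0) + (if m = j then 1 else 0)
    + (if m = k then 1 else 0) + (if m = l then 1 else 0)

lemma monomial_eq (i j k l : Fin d) (x : Fin d → ℝ) :
    x i * x j * x k * x l = ∏ m, (x m)^(cnt i j k l m) := by
  simp only [cnt, pow_add, prod_mul_distrib, pow_ite, pow_one, pow_zero]
  rw [Finset.prod_ite_eq' univ i (fun m => x m), Finset.prod_ite_eq' univ j (fun m => x m),
    Finset.prod_ite_eq' univ k (fun m => x m), Finset.prod_ite_eq' univ l (fun m => x m)]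
  simp

/-- Value of `E[x_i x_j x_k x_l]`. -/
noncomputable def Mval (i j k l : Fin d) : ℝ :=
  (1/144) * ((if i = j then (1:ℝ) else 0) * (if k = l then (1:ℝ) else 0)
    + (if i = k then (1:ℝ) else 0) * (if j = l then (1:ℝ) else 0)
    + (if i = l then (1:ℝ) else 0) * (if j = k then (1:ℝ) else 0))
  - (1/120) * ((if i = j then (1:ℝ) else 0) * (if i = k then (1:ℝ) else 0)
      * (if i = l then (1:ℝ) else 0))

lemma prod_single (i : Fin d) (n : ℕ) (f : Fin d → ℕ) (hf : ∀ m, f m = if m = i then n else 0) :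
    ∏ m, mom (f m) = mom n := by
  rw [Finset.prod_eq_single i (fun m _ hm => by rw [hf m, if_neg hm, mom_zero])
    (fun h => absurd (mem_univ i) h)]
  rw [hf i, if_pos rfl]

lemma prod_pair (i k : Fin d) (hik : i ≠ k) (a b : ℕ) (f : Fin d → ℕ)
    (hf : ∀ m, f m = if m = i then a else if m = k then b else 0) :
    ∏ m, mom (f m) = mom a * mom b := by
  rw [← Finset.prod_subset (Finset.subset_univ ({i, k} : Finset (Fin d)))
    (fun m _ hm => by
      simp only [Finset.mem_insert, Finset.mem_singleton, not_or] at hm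
      rw [hf m, if_neg hm.1, if_neg hm.2, mom_zero]),
    Finset.prod_pair hik, hf i, hf k, if_pos rfl, if_neg (Ne.symm hik), if_pos rfl]

lemma prod_mom_eq (i j k l : Fin d) : ∏ m, mom (cnt i j k l m) = Mval i j k l := by
  by_cases hij : i = j
  · subst hij
    by_cases hik : i = k
    · subst hik
      by_cases hil : i = l
      · subst hil
        rw [prod_single i 4 _ (fun m => by by_cases h : m = i <;> simp [cnt, h])]
        simp [Mval, mom_four]; norm_num
      · rw [Finset.prod_eq_zero (mem_univ l)
          (by rw [show cnt i i i l l = 1 by simp [cnt, Ne.symm hil], mom_one])]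
        simp [Mval, hil]
    · by_cases hil : i = l
      · subst hil
        rw [Finset.prod_eq_zero (mem_univ k)
          (by rw [show cnt i i k i k = 1 by simp [cnt, Ne.symm hik], mom_one])]
        simp [Mval, hik, Ne.symm hik]
      · by_cases hkl : k = l
        · subst hkl
          rw [prod_pair i k hik 2 2 _ (fun m => by
            rcases eq_or_ne m i with h1 | h1
            · subst h1; simp [cnt, hik]
            · rcases eq_or_ne m k with h2 | h2
              · subst h2; simp [cnt, h1]
              · simp [cnt, h1, h2])]
          simp [Mval, mom_two, hik, hil]; norm_num
        · rw [Finset.prod_eq_zero (mem_univ k)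
            (by rw [show cnt i i k l k = 1 by simp [cnt, Ne.symm hik, hkl], mom_one])]
          simp [Mval, hik, hil, hkl]
  · by_cases hik : i = k
    · subst hik
      by_cases hjl : j = l
      · subst hjl
        rw [prod_pair i j hij 2 2 _ (fun m => by
          rcases eq_or_ne m i with h1 | h1
          · subst h1; simp [cnt, hij]
          · rcases eq_or_ne m j with h2 | h2
            · subst h2; simp [cnt, h1]
            · simp [cnt, h1, h2])]
        simp [Mval, mom_two, hij]; norm_num
      · rw [Finset.prod_eq_zero (mem_univ j)
          (by rw [show cnt i j i l j = 1 by simp [cnt, Ne.symm hij, hjl], mom_one])]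
        simp [Mval, hij, hjl, Ne.symm hij]
    · by_cases hil : i = l
      · subst hil
        by_cases hjk : j = k
        · subst hjk
          rw [prod_pair i j hij 2 2 _ (fun m => by
            rcases eq_or_ne m i with h1 | h1
            · subst h1; simp [cnt, hij]
            · rcases eq_or_ne m j with h2 | h2
              · subst h2; simp [cnt, h1]
              · simp [cnt, h1, h2])]
          simp [Mval, mom_two, hij, hik]; norm_num
        · rw [Finset.prod_eq_zero (mem_univ j)
            (by rw [show cnt i j k i j = 1 by simp [cnt, Ne.symm hij, hjk], mom_one])]
          simp [Mval, hij, hik, hjk]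
      · rw [Finset.prod_eq_zero (mem_univ i)
          (by rw [show cnt i j k l i = 1 by simp [cnt, hij, hik, hil], mom_one])]
        simp [Mval, hij, hik, hil]

lemma hsum (Δ : Matrix (Fin d) (Fin d) ℝ) :
    ∑ i, ∑ j, ∑ k, ∑ l, Δ i j * Δ k l * Mval i j k l
      = (1/144) * (∑ i, Δ i i)^2 + (1/144) * (∑ i, ∑ j, (Δ i j)^2)
        + (1/144) * (∑ i, ∑ j, Δ i j * Δ j i) - (1/120) * (∑ i, (Δ i i)^2) := by
  have expand2 : ∀ i j k l : Fin d, Δ i j * Δ k l * Mval i j k l =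
      (1/144) * ((if i = j then (1:ℝ) else 0) * ((if k = l then (1:ℝ) else 0) * (Δ i j * Δ k l)))
      + (1/144) * ((if i = k then (1:ℝ) else 0) * ((if j = l then (1:ℝ) else 0) * (Δ i j * Δ k l)))
      + (1/144) * ((if i = l then (1:ℝ) else 0) * ((if j = k then (1:ℝ) else 0) * (Δ i j * Δ k l)))
      - (1/120) * ((if i = j then (1:ℝ) else 0) * ((if i = k then (1:ℝ) else 0)
          * ((if i = l then (1:ℝ) else 0) * (Δ i j * Δ k l)))) := by
    intro i j k l; rw [Mval]; ring
  simp_rw [expand2]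
  simp_rw [Finset.sum_sub_distrib, Finset.sum_add_distrib]
  simp_rw [← Finset.mul_sum]
  simp_rw [boole_mul]
  simp_rw [Finset.sum_ite_eq, Finset.mem_univ, if_true]
  simp_rw [Finset.sum_ite_eq, Finset.mem_univ, if_true]
  simp_rw [pow_two, Finset.sum_mul_sum]

end UnifCubeAux

open UnifCubeAux Finset in
/-- For `x` with i.i.d. `Uniform([-1/2,1/2])` coordinates and `Δ` symmetric,
`E[(xᵀΔx)²] ≥ (1/180)‖Δ‖_F²`. -/
theorem uniform_quadratic_form_lower_bound (d : ℕ) (Δ : Matrix (Fin d) (Fin d) ℝ)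
    (hΔ : Δ.IsSymm) :
    (1/180 : ℝ) * ∑ i, ∑ j, (Δ i j)^2
      ≤ ∫ x, (∑ i, ∑ j, x i * Δ i j * x j)^2 ∂(unifCube d) := by
  have hmono : ∀ i j k l : Fin d, ∫ x, Δ i j * Δ k l * (x i * x j * x k * x l) ∂(unifCube d)
      = Δ i j * Δ k l * Mval i j k l := by
    intro i j k l
    rw [integral_const_mul]
    congr 1
    calc ∫ x, x i * x j * x k * x l ∂(unifCube d)
        = ∫ x, ∏ m, (x m)^(cnt i j k l m) ∂(unifCube d) := by simp_rw [monomial_eq]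
      _ = ∏ m, mom (cnt i j k l m) := integral_monomial d _
      _ = Mval i j k l := prod_mom_eq i j k l
  have hint : ∀ i j k l : Fin d,
      Integrable (fun x => Δ i j * Δ k l * (x i * x j * x k * x l)) (unifCube d) := by
    intro i j k l
    simpa only [← monomial_eq] using
      (integrable_monomial d (cnt i j k l)).const_mul (Δ i j * Δ k l)
  have hexp : ∀ x : Fin d → ℝ, (∑ i, ∑ j, x i * Δ i j * x j)^2
      = ∑ i, ∑ j, ∑ k, ∑ l, Δ i j * Δ k l * (x i * x j * x k * x l) := by
    intro x
    rw [sq, Finset.sum_mul_sum]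
    simp_rw [Finset.sum_mul, Finset.mul_sum]
    rw [Finset.sum_congr rfl fun (i : Fin d) _ => Finset.sum_comm]
    exact Finset.sum_congr rfl fun i _ => Finset.sum_congr rfl fun j _ =>
      Finset.sum_congr rfl fun k _ => Finset.sum_congr rfl fun l _ => by ring
  have hInt : ∫ x, (∑ i, ∑ j, x i * Δ i j * x j)^2 ∂(unifCube d)
      = ∑ i, ∑ j, ∑ k, ∑ l, Δ i j * Δ k l * Mval i j k l := by
    simp_rw [hexp]
    rw [integral_finset_sum _ (fun i _ => integrable_finset_sum _ (fun j _ =>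
      integrable_finset_sum _ (fun k _ => integrable_finset_sum _ (fun l _ => hint i j k l))))]
    refine Finset.sum_congr rfl fun i _ => ?_
    rw [integral_finset_sum _ (fun j _ => integrable_finset_sum _ (fun k _ =>
      integrable_finset_sum _ (fun l _ => hint i j k l)))]
    refine Finset.sum_congr rfl fun j _ => ?_
    rw [integral_finset_sum _ (fun k _ => integrable_finset_sum _ (fun l _ => hint i j k l))]
    refine Finset.sum_congr rfl fun k _ => ?_
    rw [integral_finset_sum _ (fun l _ => hint i j k l)]
    exact Finset.sum_congr rfl fun l _ => hmono i j k l
  rw [hInt, hsum Δ]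
  have hsymm : ∑ i, ∑ j, Δ i j * Δ j i = ∑ i, ∑ j, (Δ i j)^2 := by
    refine Finset.sum_congr rfl fun i _ => Finset.sum_congr rfl fun j _ => ?_
    rw [hΔ.apply, sq]
  have hD : ∑ i, (Δ i i)^2 ≤ ∑ i, ∑ j, (Δ i j)^2 := by
    refine Finset.sum_le_sum fun i _ => ?_
    exact Finset.single_le_sum (fun j _ => sq_nonneg (Δ i j)) (Finset.mem_univ i)
  have hT : (0:ℝ) ≤ (∑ i, Δ i i)^2 := sq_nonneg _
  rw [hsymm]
  linarith
end

section
/- Let θ, θ' ∈ R^{d×k} with k ≥ d, let φ = θθᵀ and φ' = θ'θ'ᵀ, and suppose ‖φ − φ'‖_F ≤ η and the smallest singular value of θ satisfies σ_min(θ) ≥ σ₀ > 0. Then there exist orthogonal matrices R, R' ∈ R^{k×k} such that ‖θR − θ'R'‖_F ≤ η/σ₀. -/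
open Matrix Finset

noncomputable section AlignAux

private def Jmat {d k : ℕ} (hk : d ≤ k) : Matrix (Fin d) (Fin k) ℝ :=
  Matrix.of fun i j => if j = Fin.castLE hk i then 1 else 0

private lemma decomp {d k : ℕ} (hk : d ≤ k) (M : Matrix (Fin d) (Fin k) ℝ) :
    ∃ (B : Matrix (Fin d) (Fin d) ℝ) (R : Matrix (Fin k) (Fin k) ℝ),
      B.PosSemidef ∧ B * B = M * Mᵀ ∧
      R * Rᵀ = 1 ∧ Rᵀ * R = 1 ∧ M * R = B * Jmat hk ∧
      ∀ c : ℝ, 0 ≤ c →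
        (∀ v : Fin d → ℝ, c^2 * ∑ i, (v i)^2 ≤ ∑ i, ∑ j, v i * (M * Mᵀ) i j * v j) →
        (B - c • 1).PosSemidef := by
  classical
  set φ : Matrix (Fin d) (Fin d) ℝ := M * Mᵀ with hφdef
  have hφ : φ.IsHermitian := by
    have h := isHermitian_mul_conjTranspose_self M
    rwa [M.conjTranspose_eq_transpose_of_trivial] at h
  have hφpsd : φ.PosSemidef := by
    have h := posSemidef_self_mul_conjTranspose M
    rwa [M.conjTranspose_eq_transpose_of_trivial] at h
  set U : Matrix (Fin d) (Fin d) ℝ := (hφ.eigenvectorUnitary : Matrix (Fin d) (Fin d) ℝ) with hUdef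
  set lam : Fin d → ℝ := hφ.eigenvalues with hlamdef
  have hUmem := (hφ.eigenvectorUnitary).2
  have hU1 : Uᵀ * U = 1 := by
    have h := (Unitary.mem_iff.mp hUmem).1
    rwa [Matrix.star_eq_conjTranspose, U.conjTranspose_eq_transpose_of_trivial] at h
  have hU2 : U * Uᵀ = 1 := by
    have h := (Unitary.mem_iff.mp hUmem).2
    rwa [Matrix.star_eq_conjTranspose, U.conjTranspose_eq_transpose_of_trivial] at h
  have hlam0 : ∀ i, 0 ≤ lam i := hφpsd.eigenvalues_nonneg
  have hspec : φ = U * diagonal lam * Uᵀ := by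
    have h := hφ.spectral_theorem
    rw [Unitary.conjStarAlgAut_apply, Matrix.star_eq_conjTranspose, U.conjTranspose_eq_transpose_of_trivial] at h
    exact h
  set S : Matrix (Fin d) (Fin d) ℝ := diagonal (fun i => Real.sqrt (lam i)) with hSdef
  have hSt : Sᵀ = S := diagonal_transpose _
  have hSS : S * S = diagonal lam := by
    rw [hSdef, diagonal_mul_diagonal]
    exact congrArg diagonal (funext fun i => Real.mul_self_sqrt (hlam0 i))
  set B : Matrix (Fin d) (Fin d) ℝ := U * S * Uᵀ with hBdef
  have hBB : B * B = φ := by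
    have h1 : B * B = U * (S * (Uᵀ * U) * S) * Uᵀ := by
      simp only [hBdef, Matrix.mul_assoc]
    rw [h1, hU1, Matrix.mul_one, hSS, hspec, Matrix.mul_assoc]
  have hSpsd : S.PosSemidef := Matrix.posSemidef_diagonal_iff.mpr fun i => Real.sqrt_nonneg _
  have hBpsd : B.PosSemidef := by
    have h := hSpsd.mul_mul_conjTranspose_same U
    rwa [U.conjTranspose_eq_transpose_of_trivial] at h
  -- the lower-bound part
  have hlow : ∀ c : ℝ, 0 ≤ c →
      (∀ v : Fin d → ℝ, c^2 * ∑ i, (v i)^2 ≤ ∑ i, ∑ j, v i * φ i j * v j) →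
      (B - c • 1).PosSemidef := by
    intro c hc hq
    have hlamc : ∀ i, c ≤ Real.sqrt (lam i) := by
      intro i
      have h1 := hq (fun a => U a i)
      have h2 : ∑ a, (U a i)^2 = 1 := by
        have := congrFun (congrFun hU1 i) i
        simpa [Matrix.mul_apply, Matrix.one_apply, sq] using this
      have h3 : ∑ a, ∑ b, U a i * φ a b * U b i = lam i := by
        have hD : Uᵀ * φ * U = diagonal lam := by
          rw [hspec]
          calc Uᵀ * (U * diagonal lam * Uᵀ) * U
              = (Uᵀ * U) * diagonal lam * (Uᵀ * U) := by simp only [Matrix.mul_assoc]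
            _ = diagonal lam := by rw [hU1, Matrix.one_mul, Matrix.mul_one]
        have := congrFun (congrFun hD i) i
        rw [diagonal_apply_eq] at this
        rw [← this]
        simp only [Matrix.mul_apply, Matrix.transpose_apply, Finset.sum_mul]
        rw [Finset.sum_comm]
      rw [h2, mul_one, h3] at h1
      exact (Real.le_sqrt hc (hlam0 i)).mpr h1
    have hdiagc : (diagonal (fun i => Real.sqrt (lam i) - c)).PosSemidef :=
      Matrix.posSemidef_diagonal_iff.mpr fun i => sub_nonneg.mpr (hlamc i)
    have hexp : B - c • 1 = U * diagonal (fun i => Real.sqrt (lam i) - c) * Uᵀ := by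
      have hd : diagonal (fun i => Real.sqrt (lam i) - c) = S - c • 1 := by
        rw [hSdef, Matrix.smul_one_eq_diagonal, diagonal_sub]
      rw [hd, Matrix.mul_sub, Matrix.sub_mul]
      congr 1
      rw [Matrix.mul_smul, Matrix.mul_one, Matrix.smul_mul, hU2]
    rw [hexp]
    have h := hdiagc.mul_mul_conjTranspose_same U
    rwa [U.conjTranspose_eq_transpose_of_trivial] at h
  -- the matrix N = Mᵀ U, whose columns are (up to scaling) orthonormal
  set N : Matrix (Fin k) (Fin d) ℝ := Mᵀ * U with hNdef
  have hNN : Nᵀ * N = diagonal lam := by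
    have h1 : Nᵀ = Uᵀ * M := by
      rw [hNdef, Matrix.transpose_mul, Matrix.transpose_transpose]
    rw [h1, hNdef]
    calc Uᵀ * M * (Mᵀ * U) = Uᵀ * (M * Mᵀ) * U := by simp only [Matrix.mul_assoc]
      _ = Uᵀ * (U * diagonal lam * Uᵀ) * U := by rw [← hφdef, hspec]
      _ = (Uᵀ * U) * diagonal lam * (Uᵀ * U) := by simp only [Matrix.mul_assoc]
      _ = diagonal lam := by rw [hU1, Matrix.one_mul, Matrix.mul_one]
  have hcol : ∀ (i : Fin d) (i' : Fin d),
      ∑ j, N j i * N j i' = diagonal lam i i' := by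
    intro i i'
    have := congrFun (congrFun hNN i) i'
    simpa [Matrix.mul_apply, Matrix.transpose_apply] using this
  -- the candidate orthonormal vectors
  set v : Fin k → EuclideanSpace ℝ (Fin k) := fun j =>
    if h : (j : ℕ) < d then
      (Real.sqrt (lam ⟨(j : ℕ), h⟩))⁻¹ • ((WithLp.equiv 2 (Fin k → ℝ)).symm
        (fun a => N a ⟨(j : ℕ), h⟩)) else 0 with hvdef
  set s : Set (Fin k) := {j | ∃ h : (j : ℕ) < d, lam ⟨(j : ℕ), h⟩ ≠ 0} with hsdef
  have hvon : Orthonormal ℝ (s.restrict v) := by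
    rw [orthonormal_iff_ite]
    rintro ⟨j₁, hj₁⟩ ⟨j₂, hj₂⟩
    obtain ⟨h₁, hl₁⟩ := hj₁
    obtain ⟨h₂, hl₂⟩ := hj₂
    have hv₁ : s.restrict v ⟨j₁, ⟨h₁, hl₁⟩⟩ = v j₁ := rfl
    have hv₂ : s.restrict v ⟨j₂, ⟨h₂, hl₂⟩⟩ = v j₂ := rfl
    rw [hv₁, hv₂, hvdef]
    simp only [dif_pos h₁, dif_pos h₂]
    rw [inner_smul_left, inner_smul_right]
    have hinner : (inner ℝ ((WithLp.equiv 2 (Fin k → ℝ)).symm (fun a => N a ⟨(j₁ : ℕ), h₁⟩))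
        ((WithLp.equiv 2 (Fin k → ℝ)).symm (fun a => N a ⟨(j₂ : ℕ), h₂⟩)) : ℝ)
        = diagonal lam ⟨(j₁ : ℕ), h₁⟩ ⟨(j₂ : ℕ), h₂⟩ := by
      rw [← hcol, real_inner_comm]
      simp [PiLp.inner_apply]
    rw [hinner]
    by_cases heq : (⟨j₁, ⟨h₁, hl₁⟩⟩ : s) = ⟨j₂, ⟨h₂, hl₂⟩⟩
    · rw [if_pos heq]
      have hj : j₁ = j₂ := congrArg Subtype.val heq
      subst hj
      rw [diagonal_apply_eq]
      rw [starRingEnd_apply, star_trivial]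
      have hne : Real.sqrt (lam ⟨(j₁ : ℕ), h₁⟩) ≠ 0 := by
        simpa [Real.sqrt_eq_zero' ] using lt_of_le_of_ne (hlam0 _) (Ne.symm hl₁)
      field_simp [hne]
      rw [Real.sq_sqrt (hlam0 _)]
    · rw [if_neg heq]
      have hj : (⟨(j₁ : ℕ), h₁⟩ : Fin d) ≠ ⟨(j₂ : ℕ), h₂⟩ := fun hcon =>
        heq (Subtype.ext (Fin.ext (by simpa using congrArg Fin.val hcon)))
      rw [diagonal_apply_ne _ hj]
      ring
  have hcard : Module.finrank ℝ (EuclideanSpace ℝ (Fin k)) = Fintype.card (Fin k) := by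
    simp
  obtain ⟨b, hb⟩ := hvon.exists_orthonormalBasis_extension_of_card_eq hcard
  set W : Matrix (Fin k) (Fin k) ℝ := Matrix.of (fun i j => b i j) with hWdef
  have hWW : W * Wᵀ = 1 := by
    ext i j
    have h := orthonormal_iff_ite.mp b.orthonormal i j
    rw [real_inner_comm, PiLp.inner_apply] at h
    simpa [Matrix.mul_apply, hWdef, Matrix.one_apply] using h
  have hWW' : Wᵀ * W = 1 := mul_eq_one_comm.mp hWW
  -- the key entrywise identity
  have hkey : ∀ (i : Fin d) (j : Fin k),
      N j i = Real.sqrt (lam i) * W (Fin.castLE hk i) j := by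
    intro i j
    by_cases hl : lam i = 0
    · have hz : N j i = 0 := by
        have h := hcol i i
        rw [diagonal_apply_eq, hl] at h
        have h2 : ∀ a ∈ (univ : Finset (Fin k)), 0 ≤ N a i * N a i :=
          fun a _ => mul_self_nonneg _
        have := (Finset.sum_eq_zero_iff_of_nonneg h2).mp h j (mem_univ j)
        exact mul_self_eq_zero.mp this
      rw [hz, hl]
      simp
    · have hlt : ((Fin.castLE hk i : Fin k) : ℕ) < d := by
        simpa using i.isLt
      have hieq : (⟨((Fin.castLE hk i : Fin k) : ℕ), hlt⟩ : Fin d) = i := by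
        apply Fin.ext; simp
      have hmem : (Fin.castLE hk i : Fin k) ∈ s := by
        refine ⟨hlt, ?_⟩
        rw [hieq]; exact hl
      have hbv := hb _ hmem
      have hWv : W (Fin.castLE hk i) j = (Real.sqrt (lam i))⁻¹ * N j i := by
        rw [hWdef]
        show b (Fin.castLE hk i) j = _
        rw [hbv, hvdef]
        simp only [dif_pos hlt]
        rw [hieq]
        simp
      rw [hWv]
      have hs0 : Real.sqrt (lam i) ≠ 0 := by
        simpa [Real.sqrt_eq_zero' ] using lt_of_le_of_ne (hlam0 i) (Ne.symm hl)
      field_simp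
  -- matrix-level consequence: M = U * (S * (Jmat hk * W))
  have hJW : ∀ (i : Fin d) (j : Fin k), (Jmat hk * W) i j = W (Fin.castLE hk i) j := by
    intro i j
    rw [Matrix.mul_apply]
    rw [Finset.sum_eq_single (Fin.castLE hk i)]
    · simp [Jmat]
    · intro a _ ha
      simp [Jmat, ha]
    · intro h
      exact absurd (mem_univ _) h
  have hN : N = (Jmat hk * W)ᵀ * S := by
    ext j i
    rw [Matrix.mul_diagonal, Matrix.transpose_apply, hJW, hkey]
    ring
  have hM : M = U * (S * (Jmat hk * W)) := by
    have h1 : Mᵀ = Mᵀ * (U * Uᵀ) := by rw [hU2, Matrix.mul_one]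
    have h2 : Mᵀ = N * Uᵀ := by
      rw [h1, hNdef, Matrix.mul_assoc]
    have h3 := congrArg Matrix.transpose h2
    rw [Matrix.transpose_transpose, Matrix.transpose_mul, Matrix.transpose_transpose] at h3
    rw [h3, hN, Matrix.transpose_mul, Matrix.transpose_transpose, hSt]
  -- the block extension of U to a k×k orthogonal matrix
  set e : Fin d ⊕ Fin (k - d) ≃ Fin k :=
    finSumFinEquiv.trans (finCongr (Nat.add_sub_cancel' hk)) with hedef
  set Ut : Matrix (Fin k) (Fin k) ℝ :=
    (fromBlocks U 0 0 1).submatrix e.symm e.symm with hUtdef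
  have hUt1 : Ut * Utᵀ = 1 := by
    rw [hUtdef, Matrix.transpose_submatrix, Matrix.submatrix_mul_equiv]
    have hblk : (fromBlocks U 0 0 (1 : Matrix (Fin (k - d)) (Fin (k - d)) ℝ)) *
        (fromBlocks U 0 0 1)ᵀ = 1 := by
      rw [Matrix.fromBlocks_transpose, Matrix.fromBlocks_multiply]
      simp [hU2, ← Matrix.fromBlocks_one]
    rw [hblk, Matrix.submatrix_one_equiv]
  have hUt2 : Utᵀ * Ut = 1 := mul_eq_one_comm.mp hUt1
  have he1 : ∀ i : Fin d, e (Sum.inl i) = Fin.castLE hk i := by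
    intro i
    apply Fin.ext
    simp [hedef]
  -- J * Utᵀ = Uᵀ * J
  have hJUt : Jmat hk * Utᵀ = Uᵀ * Jmat hk := by
    ext i j
    have hlhs : (Jmat hk * Utᵀ) i j = Ut j (Fin.castLE hk i) := by
      rw [Matrix.mul_apply]
      rw [Finset.sum_eq_single (Fin.castLE hk i)]
      · simp [Jmat]
      · intro a _ ha
        simp [Jmat, ha]
      · intro h
        exact absurd (mem_univ _) h
    rw [hlhs]
    rcases hsj : e.symm j with a | bb
    · have hja : j = Fin.castLE hk a := by
        rw [← he1 a, ← hsj, Equiv.apply_symm_apply]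
      have hsi : e.symm (Fin.castLE hk i) = Sum.inl i := by
        rw [← he1 i, Equiv.symm_apply_apply]
      have hUtv : Ut j (Fin.castLE hk i) = U a i := by
        rw [hUtdef]
        show (fromBlocks U 0 0 1) (e.symm j) (e.symm (Fin.castLE hk i)) = U a i
        rw [hsj, hsi]
        rfl
      rw [hUtv, hja, Matrix.mul_apply]
      rw [Finset.sum_eq_single a (fun b _ hb => by
        have hne : ¬ (Fin.castLE hk a = Fin.castLE hk b) := by
          simpa [Fin.castLE_inj] using (Ne.symm hb)
        simp [Jmat, hne]) (fun h => absurd (mem_univ _) h)]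
      simp [Jmat]
    · have hjge : ¬ ((j : ℕ) < d) := by
        have : j = e (Sum.inr bb) := by rw [← hsj, Equiv.apply_symm_apply]
        rw [this]
        simp [hedef, finSumFinEquiv]
      have hsi : e.symm (Fin.castLE hk i) = Sum.inl i := by
        rw [← he1 i, Equiv.symm_apply_apply]
      have hUtv : Ut j (Fin.castLE hk i) = 0 := by
        rw [hUtdef]
        show (fromBlocks U 0 0 1) (e.symm j) (e.symm (Fin.castLE hk i)) = 0
        rw [hsj, hsi]
        rfl
      rw [hUtv, Matrix.mul_apply]
      symm
      apply Finset.sum_eq_zero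
      intro b _
      have : ¬ (j = Fin.castLE hk b) := by
        intro hcon
        apply hjge
        rw [hcon]
        simpa using b.isLt
      simp [Jmat, this]
  -- finally, the rotation
  refine ⟨B, Wᵀ * Utᵀ, hBpsd, (by rw [hBB, hφdef]), ?_, ?_, ?_, hlow⟩
  · rw [Matrix.transpose_mul, Matrix.transpose_transpose, Matrix.transpose_transpose]
    calc Wᵀ * Utᵀ * (Ut * W) = Wᵀ * (Utᵀ * Ut) * W := by simp only [Matrix.mul_assoc]
      _ = 1 := by rw [hUt2, Matrix.mul_one, hWW']
  · rw [Matrix.transpose_mul, Matrix.transpose_transpose, Matrix.transpose_transpose]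
    calc Ut * W * (Wᵀ * Utᵀ) = Ut * (W * Wᵀ) * Utᵀ := by simp only [Matrix.mul_assoc]
      _ = 1 := by rw [hWW, Matrix.mul_one, hUt1]
  · rw [hM, hBdef]
    simp only [Matrix.mul_assoc]
    rw [← Matrix.mul_assoc W Wᵀ Utᵀ, hWW, Matrix.one_mul, hJUt]



private lemma quad_eq' {n : ℕ} (A : Matrix (Fin n) (Fin n) ℝ) (x : Fin n → ℝ) :
    x ⬝ᵥ (A *ᵥ x) = ∑ i, ∑ j, x i * A i j * x j := by
  simp [dotProduct, mulVec, Finset.mul_sum, mul_assoc]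

private lemma quad_lower {n : ℕ} {A : Matrix (Fin n) (Fin n) ℝ} {c : ℝ}
    (h : (A - c • 1).PosSemidef) (x : Fin n → ℝ) :
    c * ∑ i, (x i)^2 ≤ ∑ i, ∑ j, x i * A i j * x j := by
  have h0 := h.dotProduct_mulVec_nonneg x
  rw [star_trivial, Matrix.sub_mulVec, dotProduct_sub, Matrix.smul_mulVec,
    Matrix.one_mulVec, dotProduct_smul, quad_eq'] at h0
  have hxx : x ⬝ᵥ x = ∑ i, (x i)^2 := by simp [dotProduct, sq]
  rw [hxx] at h0
  simp only [smul_eq_mul] at h0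
  linarith

private lemma quad_nonneg {n : ℕ} {A : Matrix (Fin n) (Fin n) ℝ}
    (h : A.PosSemidef) (x : Fin n → ℝ) :
    0 ≤ ∑ i, ∑ j, x i * A i j * x j := by
  have h0 := h.dotProduct_mulVec_nonneg x
  rwa [star_trivial, quad_eq'] at h0

private lemma sumJ {d k : ℕ} (hk : d ≤ k) (X : Matrix (Fin d) (Fin d) ℝ) :
    ∑ i, ∑ j, ((X * Jmat hk) i j)^2 = ∑ i, ∑ j, (X i j)^2 := by
  have hent : ∀ (i : Fin d) (j : Fin k),
      (X * Jmat hk) i j = if h : (j : ℕ) < d then X i ⟨(j : ℕ), h⟩ else 0 := by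
    intro i j
    rw [Matrix.mul_apply]
    split_ifs with h
    · rw [Finset.sum_eq_single (⟨(j : ℕ), h⟩ : Fin d)]
      · have : j = Fin.castLE hk ⟨(j : ℕ), h⟩ := by apply Fin.ext; rfl
        simp [Jmat, ← this]
      · intro b _ hb
        have : ¬ (j = Fin.castLE hk b) := by
          intro hcon
          apply hb
          apply Fin.ext
          simpa using congrArg Fin.val hcon.symm
        simp [Jmat, this]
      · intro hcon
        exact absurd (mem_univ _) hcon
    · apply Finset.sum_eq_zero
      intro b _
      have : ¬ (j = Fin.castLE hk b) := by
        intro hcon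
        apply h
        rw [hcon]
        simpa using b.isLt
      simp [Jmat, this]
  apply Finset.sum_congr rfl
  intro i _
  rw [← Finset.sum_subset (Finset.subset_univ
      ((univ : Finset (Fin d)).map (Fin.castLEEmb hk)))]
  · rw [Finset.sum_map]
    apply Finset.sum_congr rfl
    intro a _
    rw [hent]
    have ha : (Fin.castLEEmb hk a : ℕ) < d := by simpa using a.isLt
    rw [dif_pos ha]
    congr 1
  · intro x _ hx
    rw [hent]
    have : ¬ ((x : ℕ) < d) := by
      intro hlt
      apply hx
      simp only [Finset.mem_map, mem_univ, true_and]
      exact ⟨⟨(x : ℕ), hlt⟩, by apply Fin.ext; rfl⟩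
    rw [dif_neg this]
    exact zero_pow (by norm_num)

end AlignAux

/-- If `θ, θ' ∈ R^{d×k}` (`k ≥ d`) satisfy `‖θθᵀ − θ'θ'ᵀ‖_F ≤ η` and the smallest
singular value of `θ` is at least `σ₀ > 0` (equivalently `vᵀθθᵀv ≥ σ₀²‖v‖²` for all `v`),
then there are orthogonal `R, R' ∈ R^{k×k}` with `‖θR − θ'R'‖_F ≤ η/σ₀`. -/
theorem alignment_bound {d k : ℕ} (hk : d ≤ k)
    (θ θ' : Matrix (Fin d) (Fin k) ℝ) (η σ₀ : ℝ) (hσ₀ : 0 < σ₀)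
    (hσ : ∀ v : Fin d → ℝ,
      σ₀^2 * ∑ i, (v i)^2 ≤ ∑ i, ∑ j, v i * (θ * θ.transpose) i j * v j)
    (hη : Real.sqrt (∑ i, ∑ j, ((θ * θ.transpose - θ' * θ'.transpose) i j)^2) ≤ η) :
    ∃ R R' : Matrix (Fin k) (Fin k) ℝ,
      (R * R.transpose = 1 ∧ R.transpose * R = 1) ∧
      (R' * R'.transpose = 1 ∧ R'.transpose * R' = 1) ∧
      Real.sqrt (∑ i, ∑ j, ((θ * R - θ' * R') i j)^2) ≤ η / σ₀ := by
  obtain ⟨A, R, hApsd, hAA, hR1, hR2, hMR, hAlow⟩ := decomp hk θ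
  obtain ⟨B, R', hBpsd, hBB, hR1', hR2', hMR', -⟩ := decomp hk θ'
  refine ⟨R, R', ⟨hR1, hR2⟩, ⟨hR1', hR2'⟩, ?_⟩
  have hAc : (A - σ₀ • 1).PosSemidef := hAlow σ₀ hσ₀.le hσ
  have hdiff : θ * R - θ' * R' = (A - B) * Jmat hk := by
    rw [hMR, hMR', ← Matrix.sub_mul]
  rw [hdiff, sumJ hk]
  set E : Matrix (Fin d) (Fin d) ℝ := A - B with hEdef
  set Δ : Matrix (Fin d) (Fin d) ℝ := θ * θᵀ - θ' * θ'ᵀ with hΔdef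
  have hsplit : Δ = A * E + E * B := by
    rw [hΔdef, hEdef, ← hAA, ← hBB]
    noncomm_ring
  set e2 : ℝ := ∑ i, ∑ j, (E i j)^2 with he2def
  set m2 : ℝ := ∑ i, ∑ j, (Δ i j)^2 with hm2def
  have he2nn : 0 ≤ e2 := Finset.sum_nonneg fun i _ => Finset.sum_nonneg fun j _ => sq_nonneg _
  have hm2nn : 0 ≤ m2 := Finset.sum_nonneg fun i _ => Finset.sum_nonneg fun j _ => sq_nonneg _
  -- lower bound on the Frobenius inner product
  have hEA : σ₀ * e2 ≤ ∑ i, ∑ j, E i j * (A * E) i j := by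
    have hswap : ∑ i, ∑ j, E i j * (A * E) i j
        = ∑ j, ∑ i, ∑ a, E i j * A i a * E a j := by
      rw [Finset.sum_comm]
      apply Finset.sum_congr rfl
      intro j _
      apply Finset.sum_congr rfl
      intro i _
      rw [Matrix.mul_apply, Finset.mul_sum]
      apply Finset.sum_congr rfl
      intro a _
      ring
    rw [hswap]
    have h1 : ∀ j, σ₀ * ∑ i, (E i j)^2 ≤ ∑ i, ∑ a, E i j * A i a * E a j :=
      fun j => quad_lower hAc (fun r => E r j)
    calc σ₀ * e2 = ∑ j, σ₀ * ∑ i, (E i j)^2 := by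
          rw [he2def, Finset.sum_comm, ← Finset.mul_sum]
      _ ≤ _ := Finset.sum_le_sum fun j _ => h1 j
  have hEB : 0 ≤ ∑ i, ∑ j, E i j * (E * B) i j := by
    have hswap : ∑ i, ∑ j, E i j * (E * B) i j
        = ∑ i, ∑ a, ∑ j, E i a * B a j * E i j := by
      apply Finset.sum_congr rfl
      intro i _
      have hx : ∀ j, E i j * (E * B) i j = ∑ x, E i j * (E i x * B x j) := by
        intro j; rw [Matrix.mul_apply, Finset.mul_sum]
      rw [Finset.sum_congr rfl (fun j _ => hx j), Finset.sum_comm]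
      apply Finset.sum_congr rfl
      intro a _
      apply Finset.sum_congr rfl
      intro j _
      ring
    rw [hswap]
    apply Finset.sum_nonneg
    intro i _
    exact quad_nonneg hBpsd (fun r => E i r)
  have hip : σ₀ * e2 ≤ ∑ i, ∑ j, E i j * Δ i j := by
    have hd : ∑ i, ∑ j, E i j * Δ i j
        = (∑ i, ∑ j, E i j * (A * E) i j) + (∑ i, ∑ j, E i j * (E * B) i j) := by
      simp only [hsplit, Matrix.add_apply, mul_add, Finset.sum_add_distrib]
    rw [hd]
    linarith
  have hcs : (∑ i, ∑ j, E i j * Δ i j)^2 ≤ e2 * m2 := by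
    have h := Finset.sum_mul_sq_le_sq_mul_sq Finset.univ
      (fun p : Fin d × Fin d => E p.1 p.2) (fun p : Fin d × Fin d => Δ p.1 p.2)
    simpa only [Fintype.sum_prod_type, he2def, hm2def] using h
  have h0 : (0:ℝ) ≤ ∑ i, ∑ j, E i j * Δ i j :=
    le_trans (mul_nonneg hσ₀.le he2nn) hip
  have hX : ∑ i, ∑ j, E i j * Δ i j ≤ Real.sqrt e2 * Real.sqrt m2 := by
    calc ∑ i, ∑ j, E i j * Δ i j = Real.sqrt ((∑ i, ∑ j, E i j * Δ i j)^2) :=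
          (Real.sqrt_sq h0).symm
      _ ≤ Real.sqrt (e2 * m2) := Real.sqrt_le_sqrt hcs
      _ = Real.sqrt e2 * Real.sqrt m2 := Real.sqrt_mul he2nn m2
  have hηnn : (0:ℝ) ≤ η := le_trans (Real.sqrt_nonneg _) hη
  have hfin : σ₀ * (Real.sqrt e2 * Real.sqrt e2) ≤ Real.sqrt e2 * η := by
    have h1 : σ₀ * (Real.sqrt e2 * Real.sqrt e2) = σ₀ * e2 := by
      rw [Real.mul_self_sqrt he2nn]
    have h2 : Real.sqrt e2 * Real.sqrt m2 ≤ Real.sqrt e2 * η :=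
      mul_le_mul_of_nonneg_left hη (Real.sqrt_nonneg _)
    calc σ₀ * (Real.sqrt e2 * Real.sqrt e2) = σ₀ * e2 := h1
      _ ≤ ∑ i, ∑ j, E i j * Δ i j := hip
      _ ≤ Real.sqrt e2 * Real.sqrt m2 := hX
      _ ≤ Real.sqrt e2 * η := h2
  rw [le_div_iff₀ hσ₀]
  set t := Real.sqrt e2 with htdef
  have ht : 0 ≤ t := Real.sqrt_nonneg _
  rcases eq_or_lt_of_le ht with hz | hz
  · rw [← hz, zero_mul]
    exact hηnn
  · nlinarith [hfin, hz]
end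

section
/- There exist Markov transition kernels p̃ and q̃ on a two-point space {0,1} with ‖q̃(·|z') − p̃(·|z')‖_TV ≤ α for every z' ∈ {0,1}, such that the induced distributions p and q on length-T sequences (starting from z₀ = 0) satisfy ‖p − q‖_TV = 2(1 − (1 − α/2)^T). -/
/-- Probability of the sequence `w : Fin T → Bool` under the Markov chain with transition
kernel `k` (where `k z' z` is the probability of moving from `z'` to `z`), started at
`z₀ = false`. -/
def seqProb (k : Bool → Bool → ℝ) (T : ℕ) (w : Fin T → Bool) : ℝ :=
  ∏ t : Fin T,
    k (if h : (t : ℕ) = 0 then false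
       else w ⟨(t : ℕ) - 1, lt_of_le_of_lt (Nat.sub_le _ _) t.isLt⟩) (w t)

def lastState {T : ℕ} (u : Fin T → Bool) : Bool :=
  if h : T = 0 then false else u ⟨T - 1, Nat.sub_lt (Nat.pos_of_ne_zero h) one_pos⟩

lemma snoc_mk {T : ℕ} (u : Fin T → Bool) (b : Bool) (v : ℕ) (h : v < T) (h' : v < T + 1) :
    (Fin.snoc u b : Fin (T+1) → Bool) ⟨v, h'⟩ = u ⟨v, h⟩ := by
  have : (⟨v, h'⟩ : Fin (T+1)) = Fin.castSucc ⟨v, h⟩ := rfl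
  rw [this, Fin.snoc_castSucc]

lemma seqProb_snoc (k : Bool → Bool → ℝ) (T : ℕ) (u : Fin T → Bool) (b : Bool) :
    seqProb k (T+1) (Fin.snoc u b) = seqProb k T u * k (lastState u) b := by
  unfold seqProb
  rw [Fin.prod_univ_castSucc]
  congr 1
  · apply Finset.prod_congr rfl
    intro i _
    have hci : ((i.castSucc : Fin (T+1)) : ℕ) = (i : ℕ) := rfl
    by_cases hi : (i : ℕ) = 0
    · simp [hci, hi, Fin.snoc_castSucc]
    · simp only [hci, dif_neg hi]
      rw [Fin.snoc_castSucc, snoc_mk u b _ (by omega : (i : ℕ) - 1 < T)]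
  · have hl : ((Fin.last T : Fin (T+1)) : ℕ) = T := rfl
    rw [Fin.snoc_last]
    congr 1
    unfold lastState
    by_cases hT : T = 0
    · simp [hl, hT]
    · simp only [hl, dif_neg hT]
      rw [snoc_mk u b _ (Nat.sub_lt (Nat.pos_of_ne_zero hT) one_pos)]

lemma seqProb_nonneg (k : Bool → Bool → ℝ) (hk : ∀ z' z, 0 ≤ k z' z) (T : ℕ)
    (w : Fin T → Bool) : 0 ≤ seqProb k T w :=
  Finset.prod_nonneg fun _ _ => hk _ _

lemma sum_seqProb (k : Bool → Bool → ℝ) (hk : ∀ z', ∑ z, k z' z = 1) (T : ℕ) :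
    ∑ w : Fin T → Bool, seqProb k T w = 1 := by
  induction T with
  | zero => simp [seqProb]
  | succ T ih =>
    rw [← Equiv.sum_comp (Fin.snocEquiv (fun _ => Bool)) (seqProb k (T+1))]
    rw [Fintype.sum_prod_type]
    have hsnoc : ∀ (b : Bool) (u : Fin T → Bool),
        (Fin.snocEquiv fun _ => Bool) (b, u) = Fin.snoc u b := fun _ _ => rfl
    simp only [hsnoc]
    have : ∀ u : Fin T → Bool, ∑ b : Bool, seqProb k (T+1) (Fin.snoc u b)
        = seqProb k T u := by
      intro u
      simp only [seqProb_snoc]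
      rw [← Finset.mul_sum, hk, mul_one]
    calc ∑ b : Bool, ∑ u : Fin T → Bool, seqProb k (T+1) (Fin.snoc u b)
        = ∑ u : Fin T → Bool, ∑ b : Bool, seqProb k (T+1) (Fin.snoc u b) :=
          Finset.sum_comm
      _ = ∑ u : Fin T → Bool, seqProb k T u := Finset.sum_congr rfl fun u _ => this u
      _ = 1 := ih

lemma seqProb_const_false (k : Bool → Bool → ℝ) (T : ℕ) :
    seqProb k T (fun _ => false) = (k false false)^T := by
  unfold seqProb
  have h : ∀ t ∈ (Finset.univ : Finset (Fin T)),
      k (if _ : (t : ℕ) = 0 then false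
         else (fun _ => false) (⟨(t : ℕ) - 1, lt_of_le_of_lt (Nat.sub_le _ _) t.isLt⟩ : Fin T))
        ((fun _ => false) t) = k false false := by
    intro t _
    split <;> rfl
  rw [Finset.prod_congr rfl h, Finset.prod_const, Finset.card_univ, Fintype.card_fin]

lemma seqProb_id_eq_zero (T : ℕ) (w : Fin T → Bool) (hw : w ≠ fun _ => false) :
    seqProb (fun b c => if c = b then (1:ℝ) else 0) T w = 0 := by
  classical
  have hex : ∃ n, ∃ h : n < T, w ⟨n, h⟩ = true := by
    by_contra hc
    push_neg at hc
    apply hw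
    funext t
    have := hc t.1 t.2
    simpa [Bool.not_eq_true] using this
  obtain ⟨hn, hwn⟩ := Nat.find_spec hex
  apply Finset.prod_eq_zero (Finset.mem_univ (⟨Nat.find hex, hn⟩ : Fin T))
  have hprev : (if _ : ((⟨Nat.find hex, hn⟩ : Fin T) : ℕ) = 0 then false
      else w ⟨((⟨Nat.find hex, hn⟩ : Fin T) : ℕ) - 1,
        lt_of_le_of_lt (Nat.sub_le _ _) (⟨Nat.find hex, hn⟩ : Fin T).isLt⟩) = false := by
    split
    · rfl
    · rename_i h0
      have hlt : Nat.find hex - 1 < Nat.find hex := by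
        simp only [Fin.val_mk] at h0; omega
      have hmin := Nat.find_min hex hlt
      push_neg at hmin
      have h1 : Nat.find hex - 1 < T := lt_trans hlt hn
      have := hmin h1
      simpa [Bool.not_eq_true] using this
  rw [hprev, hwn]
  simp

/-- There exist transition kernels `p̃, q̃` on `{0,1}` with
`‖q̃(·|z') − p̃(·|z')‖_TV ≤ α` for every `z'`, such that the induced distributions over
length-`T` sequences started at `z₀ = 0` satisfy `‖p − q‖_TV = 2(1 − (1 − α/2)^T)`. -/
theorem large_shift_from_small_kernel_shift (α : ℝ) (hα0 : 0 ≤ α) (hα2 : α ≤ 2) (T : ℕ) :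
    ∃ ptil qtil : Bool → Bool → ℝ,
      (∀ z', (∀ z, 0 ≤ ptil z' z) ∧ (∑ z, ptil z' z = 1)) ∧
      (∀ z', (∀ z, 0 ≤ qtil z' z) ∧ (∑ z, qtil z' z = 1)) ∧
      (∀ z', ∑ z, |qtil z' z - ptil z' z| ≤ α) ∧
      ∑ w : Fin T → Bool, |seqProb ptil T w - seqProb qtil T w|
        = 2 * (1 - (1 - α/2)^T) := by
  classical
  set a := α / 2 with ha
  have ha0 : 0 ≤ a := by positivity
  have ha1 : a ≤ 1 := by rw [ha]; linarith
  refine ⟨fun b c => if c = b then 1 else 0,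
          fun b c => if b then (if c then 1 else 0) else (if c then a else 1 - a),
          ?_, ?_, ?_, ?_⟩
  · intro z'
    constructor
    · intro z; dsimp only; split <;> norm_num
    · cases z' <;> simp [Fintype.sum_bool]
  · intro z'
    constructor
    · intro z; cases z' <;> cases z <;> simp <;> linarith
    · cases z' <;> simp [Fintype.sum_bool]
  · intro z'
    cases z' <;> simp [Fintype.sum_bool, abs_of_nonneg, ha0] <;> linarith
  · set p : (Fin T → Bool) → ℝ := seqProb (fun b c => if c = b then 1 else 0) T with hp
    set q : (Fin T → Bool) → ℝ :=
      seqProb (fun b c => if b then (if c then 1 else 0) else (if c then a else 1 - a)) T with hq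
    have hqnn : ∀ w, 0 ≤ q w := by
      intro w
      apply seqProb_nonneg
      intro z' z; cases z' <;> cases z <;> simp <;> linarith
    have hqsum : ∑ w, q w = 1 := by
      apply sum_seqProb
      intro z'; cases z' <;> simp [Fintype.sum_bool]
    have hf : (fun _ => false : Fin T → Bool) ∈ (Finset.univ : Finset (Fin T → Bool)) :=
      Finset.mem_univ _
    have hpow : (1 - a)^T ≤ 1 := pow_le_one₀ (by linarith) (by linarith)
    have hqf : q (fun _ => false) = (1 - a)^T := by
      rw [hq, seqProb_const_false]; norm_num
    have hpf : p (fun _ => false) = 1 := by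
      rw [hp, seqProb_const_false]; norm_num
    rw [← Finset.add_sum_erase _ _ hf]
    have herase : ∑ w ∈ Finset.univ.erase (fun _ => false), |p w - q w|
        = ∑ w ∈ Finset.univ.erase (fun _ => false), q w := by
      apply Finset.sum_congr rfl
      intro w hw
      have hwne : w ≠ fun _ => false := (Finset.mem_erase.mp hw).1
      rw [hp, seqProb_id_eq_zero T w hwne]
      rw [abs_sub_comm, sub_zero, abs_of_nonneg (hqnn w)]
    have hsum_erase : ∑ w ∈ Finset.univ.erase (fun _ => false), q w = 1 - (1 - a)^T := by
      have := Finset.add_sum_erase _ q hf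
      rw [hqsum] at this
      linarith [hqf ▸ this]
    rw [herase, hsum_erase, hpf, hqf, abs_of_nonneg (by linarith : (0:ℝ) ≤ 1 - (1-a)^T)]
    ring
end

section
/- Let φ, φ' be symmetric d×d real matrices and let x, x' be unit-norm eigenvectors of φ, φ' corresponding to their respective top eigenvalues, with ⟨x, x'⟩ ≥ 0. Let λ₁ ≥ λ₂ be the two largest eigenvalues of φ'. Then ‖x − x'‖₂ ≤ 2^{3/2}·‖φ − φ'‖_op / (λ₁ − λ₂), assuming λ₁ > λ₂. -/
lemma cs_fin {d : ℕ} (f g : Fin d → ℝ) :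
    ∑ i, f i * g i ≤ Real.sqrt (∑ i, (f i)^2) * Real.sqrt (∑ i, (g i)^2) := by
  have h := Finset.sum_mul_sq_le_sq_mul_sq Finset.univ f g
  calc ∑ i, f i * g i ≤ |∑ i, f i * g i| := le_abs_self _
    _ = Real.sqrt ((∑ i, f i * g i)^2) := (Real.sqrt_sq_eq_abs _).symm
    _ ≤ Real.sqrt ((∑ i, (f i)^2) * ∑ i, (g i)^2) := Real.sqrt_le_sqrt h
    _ = _ := Real.sqrt_mul (Finset.sum_nonneg fun i _ => sq_nonneg _) _

set_option maxHeartbeats 1000000 in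
/-- Davis–Kahan bound for top eigenvectors: if `x, x'` are unit eigenvectors of the
symmetric matrices `φ, φ'` for their top eigenvalues `μ`, `λ₁`, with `⟨x, x'⟩ ≥ 0`,
`λ₂` bounds the Rayleigh quotient of `φ'` on the orthogonal complement of `x'`,
`λ₂ < λ₁`, and `‖φ − φ'‖_op ≤ η`, then `‖x − x'‖₂ ≤ 2^{3/2} η / (λ₁ − λ₂)`. -/
theorem davis_kahan_top_eigenvector {d : ℕ} (φ φ' : Matrix (Fin d) (Fin d) ℝ)
    (hφ : φ.IsSymm) (hφ' : φ'.IsSymm)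
    (x x' : Fin d → ℝ) (hx : ∑ i, (x i)^2 = 1) (hx' : ∑ i, (x' i)^2 = 1)
    (μ lam1 lam2 η : ℝ)
    (hxeig : ∀ i, ∑ j, φ i j * x j = μ * x i)
    (hμtop : ∀ v : Fin d → ℝ, ∑ i, (v i)^2 = 1 → ∑ i, ∑ j, v i * φ i j * v j ≤ μ)
    (hx'eig : ∀ i, ∑ j, φ' i j * x' j = lam1 * x' i)
    (hlam1top : ∀ v : Fin d → ℝ, ∑ i, (v i)^2 = 1 → ∑ i, ∑ j, v i * φ' i j * v j ≤ lam1)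
    (hlam2 : ∀ v : Fin d → ℝ, ∑ i, (v i)^2 = 1 → (∑ i, v i * x' i) = 0 →
      ∑ i, ∑ j, v i * φ' i j * v j ≤ lam2)
    (hgap : lam2 < lam1)
    (hip : 0 ≤ ∑ i, x i * x' i)
    (hop : ∀ v : Fin d → ℝ,
      Real.sqrt (∑ i, (∑ j, (φ - φ') i j * v j)^2) ≤ η * Real.sqrt (∑ i, (v i)^2)) :
    Real.sqrt (∑ i, (x i - x' i)^2) ≤ (2 : ℝ) ^ ((3 : ℝ)/2) * η / (lam1 - lam2) := by
  set c := ∑ i, x i * x' i with hc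
  set w : Fin d → ℝ := fun i => x i - c * x' i with hw
  clear_value c w
  have hgap' : 0 < lam1 - lam2 := sub_pos.2 hgap
  -- η ≥ 0
  have hη : 0 ≤ η := by
    have h := hop x'
    rw [hx', Real.sqrt_one, mul_one] at h
    exact le_trans (Real.sqrt_nonneg _) h
  have h32 : (2:ℝ) ^ ((3:ℝ)/2) = Real.sqrt 2 * 2 := by
    rw [show (3:ℝ)/2 = 1/2 + 1 by norm_num, Real.rpow_add two_pos, Real.rpow_one,
      ← Real.sqrt_eq_rpow]
  have hrhs0 : 0 ≤ (2:ℝ) ^ ((3:ℝ)/2) * η / (lam1 - lam2) :=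
    div_nonneg (mul_nonneg (Real.rpow_nonneg (by norm_num) _) hη) hgap'.le
  -- orthogonality and norms
  have hwx' : ∑ i, w i * x' i = 0 := by
    have h1 : ∀ i : Fin d, w i * x' i = x i * x' i - c * (x' i)^2 := by
      intro i; rw [hw]; ring
    rw [Finset.sum_congr rfl fun i _ => h1 i, Finset.sum_sub_distrib, ← Finset.mul_sum, hx',
      mul_one, ← hc, sub_self]
  have hww : ∑ i, (w i)^2 = 1 - c^2 := by
    have h1 : ∀ i : Fin d, (w i)^2 = (x i)^2 - 2*c*(x i * x' i) + c^2 * (x' i)^2 := by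
      intro i; rw [hw]; ring
    rw [Finset.sum_congr rfl fun i _ => h1 i, Finset.sum_add_distrib, Finset.sum_sub_distrib,
      ← Finset.mul_sum, ← Finset.mul_sum, hx, hx', ← hc]
    ring
  have hdiff : ∑ i, (x i - x' i)^2 = 2 - 2*c := by
    have h1 : ∀ i : Fin d, (x i - x' i)^2 = (x i)^2 - 2*(x i * x' i) + (x' i)^2 := by
      intro i; ring
    rw [Finset.sum_congr rfl fun i _ => h1 i, Finset.sum_add_distrib, Finset.sum_sub_distrib,
      ← Finset.mul_sum, hx, hx', ← hc]
    ring
  have hS0 : 0 ≤ ∑ i, (w i)^2 := Finset.sum_nonneg fun i _ => sq_nonneg _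
  have hc1 : c ≤ 1 := by nlinarith [hww, hS0]
  -- μ ≥ lam1 - η
  have hμ : lam1 - η ≤ μ := by
    have hB : ∑ i, ∑ j, x' i * φ i j * x' j
        = lam1 + ∑ i, x' i * (∑ j, (φ - φ') i j * x' j) := by
      have h1 : ∀ i : Fin d, ∑ j, x' i * φ i j * x' j
          = x' i * (∑ j, (φ - φ') i j * x' j) + x' i * (lam1 * x' i) := by
        intro i
        rw [← hx'eig i, Finset.mul_sum, Finset.mul_sum, ← Finset.sum_add_distrib]
        refine Finset.sum_congr rfl fun j _ => ?_
        simp only [Matrix.sub_apply]; ring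
      rw [Finset.sum_congr rfl fun i _ => h1 i, Finset.sum_add_distrib]
      have h2 : ∑ i, x' i * (lam1 * x' i) = lam1 := by
        have : ∀ i : Fin d, x' i * (lam1 * x' i) = lam1 * (x' i)^2 := fun i => by ring
        rw [Finset.sum_congr rfl fun i _ => this i, ← Finset.mul_sum, hx', mul_one]
      rw [h2]; ring
    have htop := hμtop x' hx'
    rw [hB] at htop
    have hBlb : -η ≤ ∑ i, x' i * (∑ j, (φ - φ') i j * x' j) := by
      have h3 := cs_fin (fun i => -x' i) (fun i => ∑ j, (φ - φ') i j * x' j)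
      have e1 : ∑ i, (-x' i) * (∑ j, (φ - φ') i j * x' j)
          = -(∑ i, x' i * (∑ j, (φ - φ') i j * x' j)) := by
        rw [← Finset.sum_neg_distrib]
        exact Finset.sum_congr rfl fun i _ => by ring
      have e2 : ∑ i, (-x' i)^2 = (1:ℝ) := by
        rw [Finset.sum_congr rfl fun (i : Fin d) _ => (neg_sq (x' i))]; exact hx'
      rw [e1, e2, Real.sqrt_one, one_mul] at h3
      have h4 := hop x'
      rw [hx', Real.sqrt_one, mul_one] at h4
      linarith
    linarith
  -- pieces for the key identity
  have hwxsum : ∑ i, w i * x i = ∑ i, (w i)^2 := by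
    have h1 : ∀ i : Fin d, w i * x i = (w i)^2 + c * (w i * x' i) := by
      intro i; rw [hw]; ring
    rw [Finset.sum_congr rfl fun i _ => h1 i, Finset.sum_add_distrib, ← Finset.mul_sum, hwx',
      mul_zero, add_zero]
  have hginner : ∀ i, ∑ j, (φ - φ') i j * x j = μ * x i - ∑ j, φ' i j * x j := by
    intro i
    rw [← hxeig i, ← Finset.sum_sub_distrib]
    exact Finset.sum_congr rfl fun j _ => by simp only [Matrix.sub_apply]; ring
  have hQwx : ∑ i, w i * (∑ j, φ' i j * x j) = ∑ i, ∑ j, w i * φ' i j * w j := by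
    have h1 : ∀ i : Fin d, w i * (∑ j, φ' i j * x j)
        = (∑ j, w i * φ' i j * w j) + (c * lam1) * (w i * x' i) := by
      intro i
      have h2 : ∑ j, φ' i j * x j = (∑ j, φ' i j * w j) + c * (lam1 * x' i) := by
        rw [← hx'eig i, Finset.mul_sum, ← Finset.sum_add_distrib]
        refine Finset.sum_congr rfl fun j _ => ?_
        rw [hw]; ring
      rw [h2, mul_add, Finset.mul_sum,
        Finset.sum_congr rfl fun (j : Fin d) _ => (show w i * (φ' i j * w j)
          = w i * φ' i j * w j by ring)]
      ring
    rw [Finset.sum_congr rfl fun i _ => h1 i, Finset.sum_add_distrib, ← Finset.mul_sum, hwx',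
      mul_zero, add_zero]
  -- key identity
  have hA : ∑ i, w i * (∑ j, (φ - φ') i j * x j)
      = μ * (∑ i, (w i)^2) - ∑ i, ∑ j, w i * φ' i j * w j := by
    have h1 : ∀ i : Fin d, w i * (∑ j, (φ - φ') i j * x j)
        = μ * (w i * x i) - w i * (∑ j, φ' i j * x j) := by
      intro i; rw [hginner i]; ring
    rw [Finset.sum_congr rfl fun i _ => h1 i, Finset.sum_sub_distrib, ← Finset.mul_sum,
      hwxsum, hQwx]
  -- bound on A
  have hAle : ∑ i, w i * (∑ j, (φ - φ') i j * x j)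
      ≤ Real.sqrt (∑ i, (w i)^2) * η := by
    have h3 := cs_fin w (fun i => ∑ j, (φ - φ') i j * x j)
    have h4 := hop x
    rw [hx, Real.sqrt_one, mul_one] at h4
    have h5 : Real.sqrt (∑ i, (w i)^2) * Real.sqrt (∑ i, (∑ j, (φ - φ') i j * x j)^2)
        ≤ Real.sqrt (∑ i, (w i)^2) * η :=
      mul_le_mul_of_nonneg_left h4 (Real.sqrt_nonneg _)
    exact le_trans h3 h5
  rcases hS0.lt_or_eq with hpos | h0
  swap
  · -- degenerate case: w = 0, i.e. x = x'
    have hc2 : c = 1 := by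
      nlinarith [hww, h0, hc1, mul_nonneg hip (sub_nonneg.2 hc1)]
    rw [hdiff, hc2, show (2:ℝ) - 2*1 = 0 by norm_num, Real.sqrt_zero]
    exact hrhs0
  · set S := ∑ i, (w i)^2 with hS
    set s := Real.sqrt S with hsdef
    have hs : 0 < s := Real.sqrt_pos.2 hpos
    have hs2' : s^2 = S := Real.sq_sqrt hS0
    clear_value S s
    have hs2 : s^2 = S := hs2'
    have hs1 : s ≤ 1 := by
      rw [hsdef, show (1:ℝ) = Real.sqrt 1 by rw [Real.sqrt_one]]
      exact Real.sqrt_le_sqrt (by nlinarith [hww, sq_nonneg c])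
    -- Rayleigh bound on w
    have hQle : ∑ i, ∑ j, w i * φ' i j * w j ≤ lam2 * S := by
      have hv1 : ∑ i, (w i / s)^2 = 1 := by
        rw [Finset.sum_congr rfl fun (i : Fin d) _ => (div_pow (w i) s 2), ← Finset.sum_div,
          ← hS, ← hs2, div_self (by positivity)]
      have hv2 : ∑ i, (w i / s) * x' i = 0 := by
        rw [Finset.sum_congr rfl fun (i : Fin d) _ => (show w i / s * x' i
          = (w i * x' i) / s by ring), ← Finset.sum_div, hwx', zero_div]
      have hv3 := hlam2 (fun i => w i / s) hv1 hv2
      have hv4 : ∑ i, ∑ j, (w i / s) * φ' i j * (w j / s)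
          = (∑ i, ∑ j, w i * φ' i j * w j) / s^2 := by
        rw [Finset.sum_div]
        refine Finset.sum_congr rfl fun i _ => ?_
        rw [Finset.sum_div]
        refine Finset.sum_congr rfl fun j _ => ?_
        ring
      beta_reduce at hv3
      rw [hv4, hs2] at hv3
      exact (div_le_iff₀ hpos).1 hv3
    have hMS : μ * S - (∑ i, ∑ j, w i * φ' i j * w j) ≤ s * η := by
      rw [← hA]; exact hAle
    have e3 : (lam1 - lam2) * S ≤ η * S + η * s := by
      linarith [hMS, hQle, mul_nonneg (show (0:ℝ) ≤ μ - (lam1 - η) by linarith) hS0]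
    have hkey : (lam1 - lam2) * s ≤ 2 * η := by
      rw [← hs2] at e3
      have h6 : 0 ≤ η * (1 - s) * s :=
        mul_nonneg (mul_nonneg hη (by linarith)) hs.le
      nlinarith [e3, h6, hs]
    have hsle : s ≤ 2 * η / (lam1 - lam2) := by
      rw [le_div_iff₀ hgap']
      linarith [hkey]
    calc Real.sqrt (∑ i, (x i - x' i)^2) = Real.sqrt (2 - 2*c) := by rw [hdiff]
      _ ≤ Real.sqrt (2 * S) := Real.sqrt_le_sqrt
          (by nlinarith [hww, mul_nonneg hip (sub_nonneg.2 hc1)])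
      _ = Real.sqrt 2 * s := by rw [Real.sqrt_mul (by norm_num : (0:ℝ) ≤ 2), ← hsdef]
      _ ≤ Real.sqrt 2 * (2 * η / (lam1 - lam2)) :=
          mul_le_mul_of_nonneg_left hsle (Real.sqrt_nonneg 2)
      _ = (2:ℝ) ^ ((3:ℝ)/2) * η / (lam1 - lam2) := by rw [h32]; ring
end
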